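/- Let n ≥ 2 be an integer. Define Φ : (S_{n+1})³ → pairs of (n+1)×(n+1) rational matrices by Φ(σ,τ₀,τ₁) = (P_σ·A₀·P_{τ₀}, P_σ·A₁·P_{τ₁}). Then the number of distinct pairs in the range of Φ is at most ((n+1)!)³ / (n−1)!; equivalently, (cardinality of the range of Φ) · (n−1)! ≤ ((n+1)!)³. -/

import Mathlib

open Matrix

noncomputable section

/-- `(A₁)_{i,j} = 1` iff `i = j` or `(i,j) = (1, n+1)` (here written 0-indexed). -/
def A1n (n : ℕ) : Matrix (Fin (n+1)) (Fin (n+1)) ℚ :=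
  Matrix.of fun i j => if i = j ∨ ((i : ℕ) = 0 ∧ (j : ℕ) = n) then 1 else 0

/-- `(A₀)_{i,j} = 1` iff `i = j+1`, or `(i,j) = (1, n+1)`, or `(i,j) = (n+1, n+1)`
(here written 0-indexed). -/
def A0n (n : ℕ) : Matrix (Fin (n+1)) (Fin (n+1)) ℚ :=
  Matrix.of fun i j =>
    if (i : ℕ) = (j : ℕ) + 1 ∨ ((i : ℕ) = 0 ∧ (j : ℕ) = n) ∨ ((i : ℕ) = n ∧ (j : ℕ) = n)
    then 1 else 0

/-- the permutation matrix of `σ ∈ S_{n+1}` -/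
def Pn (n : ℕ) (σ : Equiv.Perm (Fin (n+1))) : Matrix (Fin (n+1)) (Fin (n+1)) ℚ :=
  σ.permMatrix ℚ

/-- `Φ(σ,τ₀,τ₁) = (P_σ·A₀·P_{τ₀}, P_σ·A₁·P_{τ₁})`. -/
def Phi (n : ℕ) (t : Equiv.Perm (Fin (n+1)) × Equiv.Perm (Fin (n+1)) × Equiv.Perm (Fin (n+1))) :
    Matrix (Fin (n+1)) (Fin (n+1)) ℚ × Matrix (Fin (n+1)) (Fin (n+1)) ℚ :=
  (Pn n t.1 * A0n n * Pn n t.2.1, Pn n t.1 * A1n n * Pn n t.2.2)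

-- auxiliary lemmas
lemma sandwich (n : ℕ) (σ τ : Equiv.Perm (Fin (n+1))) (A : Matrix (Fin (n+1)) (Fin (n+1)) ℚ) :
    Pn n σ * A * Pn n τ = Matrix.of fun i j => A (σ i) (τ⁻¹ j) := by
  unfold Pn Equiv.Perm.permMatrix
  rw [PEquiv.toMatrix_toPEquiv_mul, PEquiv.mul_toMatrix_toPEquiv]
  ext i j
  simp [Matrix.submatrix_apply]

def embN (n : ℕ) : Fin (n-1) ↪ Fin (n+1) :=
  ⟨fun k => ⟨(k : ℕ) + 1, by have := k.isLt; omega⟩, fun a b h => by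
    have := Fin.mk.injEq ((a:ℕ)+1) _ ((b:ℕ)+1) _ ▸ h
    exact Fin.ext (by simpa [Fin.ext_iff] using h)⟩

def rhoN (n : ℕ) (π : Equiv.Perm (Fin (n-1))) : Equiv.Perm (Fin (n+1)) :=
  π.viaEmbedding (embN n)

lemma rho_zero (n : ℕ) (π : Equiv.Perm (Fin (n-1))) : rhoN n π 0 = 0 := by
  apply Equiv.Perm.viaEmbedding_apply_of_notMem
  rintro ⟨k, hk⟩
  have := congrArg Fin.val hk
  change (k:ℕ) + 1 = ((0 : Fin (n+1)) : ℕ) at this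
  simp at this

lemma rho_last (n : ℕ) (π : Equiv.Perm (Fin (n-1))) : rhoN n π (Fin.last n) = Fin.last n := by
  apply Equiv.Perm.viaEmbedding_apply_of_notMem
  rintro ⟨k, hk⟩
  have := congrArg Fin.val hk
  have hlt := k.isLt
  change (k:ℕ) + 1 = ((Fin.last n : Fin (n+1)) : ℕ) at this
  simp [Fin.val_last] at this
  omega

lemma cond0_iff (n : ℕ) (i j : Fin (n+1)) :
    ((i : ℕ) = (j : ℕ) + 1 ∨ ((i : ℕ) = 0 ∧ (j : ℕ) = n) ∨ ((i : ℕ) = n ∧ (j : ℕ) = n)) ↔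
    (i = finRotate (n+1) j ∨ (i = Fin.last n ∧ j = Fin.last n)) := by
  have hc : ((finRotate (n+1) j : Fin (n+1)) : ℕ) = if (j:ℕ) = n then 0 else (j:ℕ)+1 := by
    rw [finRotate_succ_apply, Fin.val_add_one]
    simp [Fin.ext_iff]
  have hi := i.isLt; have hj := j.isLt
  rw [Fin.ext_iff, Fin.ext_iff, Fin.ext_iff, hc]
  simp only [Fin.val_last]
  split_ifs <;> omega

lemma cond1_iff (n : ℕ) (i j : Fin (n+1)) :
    (i = j ∨ ((i : ℕ) = 0 ∧ (j : ℕ) = n)) ↔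
    (i = j ∨ (i = (0 : Fin (n+1)) ∧ j = Fin.last n)) := by
  rw [Fin.ext_iff (a := i) (b := (0 : Fin (n+1))), Fin.ext_iff (a := j) (b := Fin.last n)]
  simp [Fin.val_last]

section keys
variable {n : ℕ} (ρ : Equiv.Perm (Fin (n+1))) (h0 : ρ 0 = 0) (hl : ρ (Fin.last n) = Fin.last n)
include h0 hl

lemma keyA1 (i j : Fin (n+1)) : A1n n (ρ i) (ρ j) = A1n n i j := by
  have hiff : (ρ i = ρ j ∨ ((ρ i : ℕ) = 0 ∧ (ρ j : ℕ) = n)) ↔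
      (i = j ∨ ((i : ℕ) = 0 ∧ (j : ℕ) = n)) := by
    rw [cond1_iff, cond1_iff]
    constructor
    · rintro (h | ⟨h1, h2⟩)
      · exact Or.inl (ρ.injective h)
      · exact Or.inr ⟨ρ.injective (h1.trans h0.symm), ρ.injective (h2.trans hl.symm)⟩
    · rintro (h | ⟨h1, h2⟩)
      · exact Or.inl (congrArg ρ h)
      · exact Or.inr ⟨h1 ▸ h0, h2 ▸ hl⟩
  simp only [A1n, Matrix.of_apply]
  exact if_congr hiff rfl rfl

lemma keyA0 (i j : Fin (n+1)) :
    A0n n (ρ i) ((finRotate (n+1))⁻¹ (ρ (finRotate (n+1) j))) = A0n n i j := by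
  set c := finRotate (n+1) with hcdef
  have hcc : c (c⁻¹ (ρ (c j))) = ρ (c j) := Equiv.apply_symm_apply c _
  have hlast : (c⁻¹ (ρ (c j)) = Fin.last n) ↔ j = Fin.last n := by
    rw [Equiv.Perm.inv_eq_iff_eq]
    constructor
    · intro h
      have : ρ (c j) = 0 := by rw [h, hcdef, finRotate_last]
      have h2 : c j = 0 := ρ.injective (this.trans h0.symm)
      have : c j = c (Fin.last n) := by rw [h2, hcdef, finRotate_last]
      exact c.injective this
    · intro h
      rw [h, hcdef, finRotate_last, h0, ← finRotate_last (n := n)]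
  have hiff : ((ρ i : ℕ) = (c⁻¹ (ρ (c j)) : ℕ) + 1 ∨
      ((ρ i : ℕ) = 0 ∧ ((c⁻¹ (ρ (c j)) : Fin (n+1)) : ℕ) = n) ∨
      ((ρ i : ℕ) = n ∧ ((c⁻¹ (ρ (c j)) : Fin (n+1)) : ℕ) = n)) ↔
      ((i : ℕ) = (j : ℕ) + 1 ∨ ((i : ℕ) = 0 ∧ (j : ℕ) = n) ∨ ((i : ℕ) = n ∧ (j : ℕ) = n)) := by
    rw [cond0_iff, cond0_iff]
    constructor
    · rintro (h | ⟨h1, h2⟩)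
      · rw [Fin.ext_iff] at h ⊢
        rw [hcc] at h
        exact Or.inl (Fin.ext_iff.mp (ρ.injective (Fin.ext h)))
      · exact Or.inr ⟨ρ.injective (h1.trans hl.symm), hlast.mp h2⟩
    · rintro (h | ⟨h1, h2⟩)
      · exact Or.inl (by rw [hcc, h])
      · exact Or.inr ⟨h1 ▸ hl, hlast.mpr h2⟩
  simp only [A0n, Matrix.of_apply]
  exact if_congr hiff rfl rfl

end keys

lemma Phi_mul (n : ℕ) (π : Equiv.Perm (Fin (n-1)))
    (t : Equiv.Perm (Fin (n+1)) × Equiv.Perm (Fin (n+1)) × Equiv.Perm (Fin (n+1))) :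
    Phi n (rhoN n π * t.1,
           t.2.1 * ((finRotate (n+1))⁻¹ * (rhoN n π)⁻¹ * finRotate (n+1)),
           t.2.2 * (rhoN n π)⁻¹) = Phi n t := by
  obtain ⟨σ, τ0, τ1⟩ := t
  have h0 := rho_zero n π
  have hl := rho_last n π
  have e0 : Pn n (rhoN n π * σ) * A0n n *
      Pn n (τ0 * ((finRotate (n+1))⁻¹ * (rhoN n π)⁻¹ * finRotate (n+1))) =
      Pn n σ * A0n n * Pn n τ0 := by
    rw [sandwich, sandwich]
    ext i j
    simp only [Matrix.of_apply, _root_.mul_inv_rev, inv_inv, Equiv.Perm.mul_apply]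
    exact keyA0 (rhoN n π) h0 hl (σ i) (τ0⁻¹ j)
  have e1 : Pn n (rhoN n π * σ) * A1n n * Pn n (τ1 * (rhoN n π)⁻¹) =
      Pn n σ * A1n n * Pn n τ1 := by
    rw [sandwich, sandwich]
    ext i j
    simp only [Matrix.of_apply, _root_.mul_inv_rev, inv_inv, Equiv.Perm.mul_apply]
    exact keyA1 (rhoN n π) h0 hl (σ i) (τ1⁻¹ j)
  unfold Phi
  simp only
  rw [e0, e1]

/-- The number of distinct pairs of matrices arising from triples of permutations, i.e.
the number of distinct algorithms on the `n`-dimensional simplex, is at most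
`((n+1)!)³ / (n−1)!`. -/
theorem count_distinct_algorithms (n : ℕ) (hn : 2 ≤ n) :
    (Set.range (Phi n)).ncard * (n - 1).factorial ≤ ((n + 1).factorial) ^ 3 := by
  classical
  have h1 : Set.range (Phi n) = ((Finset.univ.image (Phi n)) : Set _) := by
    rw [Finset.coe_image, Finset.coe_univ, Set.image_univ]
  rw [h1, Set.ncard_coe_finset]
  have hfib : ∀ v ∈ Finset.univ.image (Phi n),
      (n-1).factorial ≤ (Finset.univ.filter fun x => Phi n x = v).card := by
    intro v hv
    obtain ⟨t, _, ht⟩ := Finset.mem_image.mp hv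
    set F : Equiv.Perm (Fin (n-1)) →
        Equiv.Perm (Fin (n+1)) × Equiv.Perm (Fin (n+1)) × Equiv.Perm (Fin (n+1)) :=
      fun π => (rhoN n π * t.1,
        t.2.1 * ((finRotate (n+1))⁻¹ * (rhoN n π)⁻¹ * finRotate (n+1)),
        t.2.2 * (rhoN n π)⁻¹) with hF
    have hmaps : ∀ π ∈ (Finset.univ : Finset (Equiv.Perm (Fin (n-1)))),
        F π ∈ Finset.univ.filter fun x => Phi n x = v := by
      intro π _
      exact Finset.mem_filter.mpr ⟨Finset.mem_univ _, (Phi_mul n π t).trans ht⟩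
    have hinj : Set.InjOn F (Finset.univ : Finset (Equiv.Perm (Fin (n-1)))) := by
      intro a _ b _ hab
      have h2 : rhoN n a = rhoN n b := mul_right_cancel (congrArg Prod.fst hab)
      ext k
      have hk := Equiv.ext_iff.mp h2 (embN n k)
      rw [rhoN, rhoN, Equiv.Perm.viaEmbedding_apply, Equiv.Perm.viaEmbedding_apply] at hk
      exact Fin.ext_iff.mp ((embN n).injective hk)
    calc (n-1).factorial = (Finset.univ : Finset (Equiv.Perm (Fin (n-1)))).card := by
          simp [Finset.card_univ, Fintype.card_perm]
      _ ≤ _ := Finset.card_le_card_of_injOn F hmaps hinj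
  have hsum := Finset.card_nsmul_le_sum (Finset.univ.image (Phi n))
    (fun v => (Finset.univ.filter fun x => Phi n x = v).card) ((n-1).factorial) hfib
  rw [smul_eq_mul] at hsum
  calc (Finset.univ.image (Phi n)).card * (n-1).factorial
      ≤ ∑ v ∈ Finset.univ.image (Phi n), (Finset.univ.filter fun x => Phi n x = v).card := hsum
    _ = (Finset.univ : Finset (Equiv.Perm (Fin (n+1)) × Equiv.Perm (Fin (n+1)) ×
          Equiv.Perm (Fin (n+1)))).card :=
        (Finset.card_eq_sum_card_image (Phi n) Finset.univ).symm
    _ = ((n + 1).factorial) ^ 3 := by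
        simp only [Finset.card_univ, Fintype.card_prod, Fintype.card_perm, Fintype.card_fin]
        ring
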